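/- arXiv:2111.14222 — 2 statements merged into one kernel-verified Lean document; each statement's English description precedes it below -/
import Mathlib

section
/- Let H be a complex Hilbert space, let A, B, C, D be Hilbert–Schmidt operators on H, and let 0 ≤ ν ≤ 1. Let T denote the block operator [[A, B],[C, D]] on H ⊕ H. Then w_{(2,ν)}(T)² ≤ w_{(2,ν)}(A)² + w_{(2,ν)}(D)² + ‖B‖₂² + ‖C‖₂². -/
variable {H : Type*} [NormedAddCommGroup H] [InnerProductSpace ℂ H] [CompleteSpace H]

/-- The operator `ν e^{iθ} A + (1-ν) e^{-iθ} A*`. -/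
noncomputable def weightedPart {E : Type*} [NormedAddCommGroup E] [InnerProductSpace ℂ E]
    [CompleteSpace E] (ν θ : ℝ) (A : E →L[ℂ] E) : E →L[ℂ] E :=
  ((ν : ℂ) * Complex.exp (θ * Complex.I)) • A +
    (((1 - ν : ℝ) : ℂ) * Complex.exp (-(θ * Complex.I))) • ContinuousLinearMap.adjoint A

/-- The Hilbert–Schmidt norm `‖A‖₂ = √(∑ᵢ ‖A eᵢ‖²)` computed w.r.t. a Hilbert basis `e`. -/
noncomputable def hsNorm {E : Type*} [NormedAddCommGroup E] [InnerProductSpace ℂ E]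
    {ι : Type*} (e : HilbertBasis ι ℂ E) (A : E →L[ℂ] E) : ℝ :=
  Real.sqrt (∑' i, ‖A (e i)‖ ^ 2)

/-- The trace `tr(T) = ∑ᵢ ⟨eᵢ, T eᵢ⟩` computed w.r.t. a Hilbert basis `e`. -/
noncomputable def trBasis {E : Type*} [NormedAddCommGroup E] [InnerProductSpace ℂ E]
    {ι : Type*} (e : HilbertBasis ι ℂ E) (T : E →L[ℂ] E) : ℂ :=
  ∑' i, (inner ℂ (e i) (T (e i)) : ℂ)

/-- The weighted Hilbert–Schmidt numerical radius
`w_{(2,ν)}(A) = sup_{θ ∈ ℝ} ‖ν e^{iθ} A + (1-ν) e^{-iθ} A*‖₂`. -/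
noncomputable def wHS {E : Type*} [NormedAddCommGroup E] [InnerProductSpace ℂ E]
    [CompleteSpace E] {ι : Type*} (e : HilbertBasis ι ℂ E) (ν : ℝ) (A : E →L[ℂ] E) : ℝ :=
  ⨆ θ : ℝ, hsNorm e (weightedPart ν θ A)

/-- The block operator `[[X, Y],[Z, W]]` on the Hilbert space direct sum `H ⊕₂ H`,
mapping `(x, y)` to `(Xx + Yy, Zx + Wy)`. -/
noncomputable def blockOp (X Y Z W : H →L[ℂ] H) :
    WithLp 2 (H × H) →L[ℂ] WithLp 2 (H × H) :=
  ((WithLp.prodContinuousLinearEquiv 2 ℂ H H).symm.toContinuousLinearMap).comp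
    ((((X.comp (ContinuousLinearMap.fst ℂ H H)) + (Y.comp (ContinuousLinearMap.snd ℂ H H))).prod
      ((Z.comp (ContinuousLinearMap.fst ℂ H H)) + (W.comp (ContinuousLinearMap.snd ℂ H H)))).comp
      (WithLp.prodContinuousLinearEquiv 2 ℂ H H).toContinuousLinearMap)

/-! ### Auxiliary Hilbert–Schmidt theory -/

open ContinuousLinearMap
open scoped ENNReal NNReal

set_option linter.unusedSectionVars false

section AuxHS

variable {E F : Type*} [NormedAddCommGroup E] [InnerProductSpace ℂ E]
  [NormedAddCommGroup F] [InnerProductSpace ℂ F]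

/-- The Hilbert–Schmidt "energy" (squared HS norm) valued in `ℝ≥0∞`. -/
noncomputable def hsE {ι : Type*} (e : HilbertBasis ι ℂ E) (S : E →L[ℂ] F) : ℝ≥0∞ :=
  ∑' i, (‖S (e i)‖₊ : ℝ≥0∞) ^ 2

lemma enn_norm_sq (x : F) : (‖x‖₊ : ℝ≥0∞) ^ 2 = ENNReal.ofReal (‖x‖ ^ 2) := by
  rw [ENNReal.ofReal_pow (norm_nonneg _), ← ENNReal.ofReal_coe_nnreal, coe_nnnorm]

lemma parsevalE [CompleteSpace E] {ι : Type*} (b : HilbertBasis ι ℂ E) (x : E) :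
    ∑' i, (‖(inner ℂ (b i) x : ℂ)‖₊ : ℝ≥0∞) ^ 2 = (‖x‖₊ : ℝ≥0∞) ^ 2 := by
  have h := (b.hasSum_inner_mul_inner x x).mapL Complex.reCLM
  have h2 : HasSum (fun i => ‖(inner ℂ (b i) x : ℂ)‖ ^ 2) (‖x‖ ^ 2) := by
    convert h using 2 with i
    · rw [← inner_conj_symm x (b i)]
      rw [mul_comm, Complex.mul_conj]
      simp [Complex.sq_norm]
    · exact (inner_self_eq_norm_sq (𝕜 := ℂ) x).symm
  calc ∑' i, (‖(inner ℂ (b i) x : ℂ)‖₊ : ℝ≥0∞) ^ 2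
      = ∑' i, ENNReal.ofReal (‖(inner ℂ (b i) x : ℂ)‖ ^ 2) := by
        exact tsum_congr fun i => enn_norm_sq _
    _ = ENNReal.ofReal (∑' i, ‖(inner ℂ (b i) x : ℂ)‖ ^ 2) :=
        (ENNReal.ofReal_tsum_of_nonneg (fun i => sq_nonneg _) h2.summable).symm
    _ = ENNReal.ofReal (‖x‖ ^ 2) := by rw [h2.tsum_eq]
    _ = _ := (enn_norm_sq x).symm

lemma hsE_adjoint [CompleteSpace E] [CompleteSpace F] {ι κ : Type*}
    (b : HilbertBasis ι ℂ E) (c : HilbertBasis κ ℂ F) (S : E →L[ℂ] F) :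
    hsE b S = hsE c (adjoint S) := by
  unfold hsE
  calc ∑' i, (‖S (b i)‖₊ : ℝ≥0∞) ^ 2
      = ∑' i, ∑' j, (‖(inner ℂ (c j) (S (b i)) : ℂ)‖₊ : ℝ≥0∞) ^ 2 :=
        tsum_congr fun i => (parsevalE c (S (b i))).symm
    _ = ∑' j, ∑' i, (‖(inner ℂ (c j) (S (b i)) : ℂ)‖₊ : ℝ≥0∞) ^ 2 := ENNReal.tsum_comm
    _ = ∑' j, (‖adjoint S (c j)‖₊ : ℝ≥0∞) ^ 2 := by
        refine tsum_congr fun j => ?_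
        rw [← parsevalE b (adjoint S (c j))]
        refine tsum_congr fun i => ?_
        congr 2
        rw [← adjoint_inner_left, ← inner_conj_symm (b i), RCLike.nnnorm_conj]

lemma hsE_adjoint_self [CompleteSpace E] {ι : Type*} (b : HilbertBasis ι ℂ E)
    (S : E →L[ℂ] E) : hsE b S = hsE b (adjoint S) := hsE_adjoint b b S

/-- The bridge between `hsNorm` and `hsE`. -/
lemma hsNorm_sq_eq {ι : Type*} (e : HilbertBasis ι ℂ E) (S : E →L[ℂ] E) :
    hsNorm e S ^ 2 = (hsE e S).toReal := by
  unfold hsNorm hsE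
  rw [Real.sq_sqrt (tsum_nonneg fun i => sq_nonneg _),
    ENNReal.tsum_toReal_eq (fun i => by rw [enn_norm_sq]; exact ENNReal.ofReal_ne_top)]
  exact (tsum_congr fun i => by rw [enn_norm_sq, ENNReal.toReal_ofReal (sq_nonneg _)]).symm

lemma hsNorm_nonneg {ι : Type*} (e : HilbertBasis ι ℂ E) (S : E →L[ℂ] E) :
    0 ≤ hsNorm e S := Real.sqrt_nonneg _

lemma hsE_ne_top_of_summable {ι : Type*} (e : HilbertBasis ι ℂ E) (S : E →L[ℂ] E)
    (h : Summable fun i => ‖S (e i)‖ ^ 2) : hsE e S ≠ ⊤ := by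
  unfold hsE
  rw [tsum_congr fun i => enn_norm_sq (S (e i)),
    ← ENNReal.ofReal_tsum_of_nonneg (fun i => sq_nonneg _) h]
  exact ENNReal.ofReal_ne_top

end AuxHS

section Block

variable {ι κ : Type*}

/-- row operator `(x,y) ↦ X x + Y y`. -/
noncomputable def rowOp (X Y : H →L[ℂ] H) : WithLp 2 (H × H) →L[ℂ] H :=
  (X.comp (ContinuousLinearMap.fst ℂ H H) + Y.comp (ContinuousLinearMap.snd ℂ H H)).comp
    (WithLp.prodContinuousLinearEquiv 2 ℂ H H).toContinuousLinearMap

/-- column operator `h ↦ (X h, Y h)`. -/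
noncomputable def colOp (X Y : H →L[ℂ] H) : H →L[ℂ] WithLp 2 (H × H) :=
  ((WithLp.prodContinuousLinearEquiv 2 ℂ H H).symm.toContinuousLinearMap).comp (X.prod Y)

lemma rowOp_apply (X Y : H →L[ℂ] H) (v : WithLp 2 (H × H)) :
    rowOp X Y v = X v.fst + Y v.snd := rfl

lemma colOp_fst (X Y : H →L[ℂ] H) (h : H) : (colOp X Y h).fst = X h := rfl
lemma colOp_snd (X Y : H →L[ℂ] H) (h : H) : (colOp X Y h).snd = Y h := rfl

lemma adjoint_rowOp (X Y : H →L[ℂ] H) :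
    adjoint (rowOp X Y) = colOp (adjoint X) (adjoint Y) := by
  symm
  rw [eq_adjoint_iff]
  intro h v
  rw [WithLp.prod_inner_apply]
  show inner ℂ (adjoint X h) v.fst + inner ℂ (adjoint Y h) v.snd = inner ℂ h (X v.fst + Y v.snd)
  rw [inner_add_right, adjoint_inner_left, adjoint_inner_left]

lemma norm_sq_withLp (v : WithLp 2 (H × H)) :
    (‖v‖₊ : ℝ≥0∞) ^ 2 = (‖v.fst‖₊ : ℝ≥0∞) ^ 2 + (‖v.snd‖₊ : ℝ≥0∞) ^ 2 := by
  rw [enn_norm_sq, enn_norm_sq, enn_norm_sq, WithLp.prod_norm_sq_eq_of_L2,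
    ENNReal.ofReal_add (sq_nonneg _) (sq_nonneg _)]

lemma hsE_rowOp (f : HilbertBasis κ ℂ (WithLp 2 (H × H)))
    (e : HilbertBasis ι ℂ H) (X Y : H →L[ℂ] H) :
    hsE f (rowOp X Y) = hsE e X + hsE e Y := by
  rw [hsE_adjoint f e, adjoint_rowOp]
  unfold hsE
  have h : ∀ i, (‖colOp (adjoint X) (adjoint Y) (e i)‖₊ : ℝ≥0∞) ^ 2 =
      (‖adjoint X (e i)‖₊ : ℝ≥0∞) ^ 2 + (‖adjoint Y (e i)‖₊ : ℝ≥0∞) ^ 2 := fun i =>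
    norm_sq_withLp _
  rw [tsum_congr h, ENNReal.tsum_add]
  exact congrArg₂ (· + ·) (hsE_adjoint_self e X).symm (hsE_adjoint_self e Y).symm

lemma hsE_blockOp (f : HilbertBasis κ ℂ (WithLp 2 (H × H)))
    (e : HilbertBasis ι ℂ H) (X Y Z W : H →L[ℂ] H) :
    hsE f (blockOp X Y Z W) = hsE e X + hsE e Y + hsE e Z + hsE e W := by
  have h : ∀ k, (‖blockOp X Y Z W (f k)‖₊ : ℝ≥0∞) ^ 2 =
      (‖rowOp X Y (f k)‖₊ : ℝ≥0∞) ^ 2 + (‖rowOp Z W (f k)‖₊ : ℝ≥0∞) ^ 2 := by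
    intro k
    rw [norm_sq_withLp]
    rfl
  calc hsE f (blockOp X Y Z W) = hsE f (rowOp X Y) + hsE f (rowOp Z W) := by
        unfold hsE; rw [tsum_congr h, ENNReal.tsum_add]
    _ = hsE e X + hsE e Y + (hsE e Z + hsE e W) := by
        rw [hsE_rowOp f e, hsE_rowOp f e]
    _ = _ := by ring

lemma adjoint_blockOp (X Y Z W : H →L[ℂ] H) :
    adjoint (blockOp X Y Z W) = blockOp (adjoint X) (adjoint Z) (adjoint Y) (adjoint W) := by
  symm
  rw [eq_adjoint_iff]
  intro v w
  have h1 : blockOp (adjoint X) (adjoint Z) (adjoint Y) (adjoint W) v =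
      (WithLp.prodContinuousLinearEquiv 2 ℂ H H).symm
        (adjoint X v.fst + adjoint Z v.snd, adjoint Y v.fst + adjoint W v.snd) := rfl
  have h2 : blockOp X Y Z W w =
      (WithLp.prodContinuousLinearEquiv 2 ℂ H H).symm
        (X w.fst + Y w.snd, Z w.fst + W w.snd) := rfl
  rw [h1, h2, WithLp.prod_inner_apply, WithLp.prod_inner_apply]
  show (inner ℂ (adjoint X v.fst + adjoint Z v.snd) w.fst : ℂ)
      + inner ℂ (adjoint Y v.fst + adjoint W v.snd) w.snd
      = inner ℂ v.fst (X w.fst + Y w.snd) + inner ℂ v.snd (Z w.fst + W w.snd)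
  rw [inner_add_left, inner_add_left, inner_add_right, inner_add_right,
    adjoint_inner_left, adjoint_inner_left, adjoint_inner_left, adjoint_inner_left]
  ring

lemma blockOp_lin (c c' : ℂ) (X Y Z W X' Y' Z' W' : H →L[ℂ] H) :
    c • blockOp X Y Z W + c' • blockOp X' Y' Z' W' =
      blockOp (c • X + c' • X') (c • Y + c' • Y') (c • Z + c' • Z') (c • W + c' • W') := by
  ext v
  refine (WithLp.prodContinuousLinearEquiv 2 ℂ H H).injective (Prod.ext ?_ ?_)
  · show c • (X v.fst + Y v.snd) + c' • (X' v.fst + Y' v.snd)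
        = (c • X + c' • X') v.fst + (c • Y + c' • Y') v.snd
    simp only [ContinuousLinearMap.add_apply, ContinuousLinearMap.smul_apply, smul_add]
    abel
  · show c • (Z v.fst + W v.snd) + c' • (Z' v.fst + W' v.snd)
        = (c • Z + c' • Z') v.fst + (c • W + c' • W') v.snd
    simp only [ContinuousLinearMap.add_apply, ContinuousLinearMap.smul_apply, smul_add]
    abel

end Block

section Convexity

variable {E : Type*} [NormedAddCommGroup E] [InnerProductSpace ℂ E]

lemma norm_scal₁ {ν : ℝ} (h0 : 0 ≤ ν) (θ : ℝ) :
    ‖(ν : ℂ) * Complex.exp (θ * Complex.I)‖ = ν := by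
  rw [norm_mul, Complex.norm_exp, Complex.norm_real]
  simp [abs_of_nonneg h0]

lemma norm_scal₂ {ν : ℝ} (h1 : ν ≤ 1) (θ : ℝ) :
    ‖((1 - ν : ℝ) : ℂ) * Complex.exp (-(θ * Complex.I))‖ = 1 - ν := by
  rw [norm_mul, Complex.norm_exp, Complex.norm_real]
  simp [abs_of_nonneg (by linarith : (0:ℝ) ≤ 1 - ν)]

lemma conv_sq {ν : ℝ} (h0 : 0 ≤ ν) (h1 : ν ≤ 1) (θ : ℝ) (u v : E) :
    ‖((ν : ℂ) * Complex.exp (θ * Complex.I)) • u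
      + (((1 - ν : ℝ) : ℂ) * Complex.exp (-(θ * Complex.I))) • v‖ ^ 2
      ≤ ν * ‖u‖ ^ 2 + (1 - ν) * ‖v‖ ^ 2 := by
  have hn : ‖((ν : ℂ) * Complex.exp (θ * Complex.I)) • u
      + (((1 - ν : ℝ) : ℂ) * Complex.exp (-(θ * Complex.I))) • v‖
      ≤ ν * ‖u‖ + (1 - ν) * ‖v‖ := by
    refine (norm_add_le _ _).trans ?_
    rw [norm_smul, norm_smul, norm_scal₁ h0, norm_scal₂ h1]
  have h3 : (0:ℝ) ≤ 1 - ν := by linarith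
  have h2 : (0:ℝ) ≤ ν * ‖u‖ + (1 - ν) * ‖v‖ :=
    add_nonneg (mul_nonneg h0 (norm_nonneg u)) (mul_nonneg h3 (norm_nonneg v))
  have h4 := pow_le_pow_left₀ (norm_nonneg _) hn 2
  nlinarith [h4, mul_nonneg (mul_nonneg h0 h3) (sq_nonneg (‖u‖ - ‖v‖))]

end Convexity

lemma hsE_conv {E : Type*} [NormedAddCommGroup E] [InnerProductSpace ℂ E] [CompleteSpace E]
    {ι : Type*} (e : HilbertBasis ι ℂ E) {ν : ℝ} (h0 : 0 ≤ ν) (h1 : ν ≤ 1) (θ : ℝ)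
    (X Y : E →L[ℂ] E) :
    hsE e (((ν : ℂ) * Complex.exp (θ * Complex.I)) • X
      + (((1 - ν : ℝ) : ℂ) * Complex.exp (-(θ * Complex.I))) • adjoint Y)
      ≤ ENNReal.ofReal ν * hsE e X + ENNReal.ofReal (1 - ν) * hsE e Y := by
  set c := (ν : ℂ) * Complex.exp (θ * Complex.I)
  set c' := ((1 - ν : ℝ) : ℂ) * Complex.exp (-(θ * Complex.I))
  have key : ∀ i, (‖(c • X + c' • adjoint Y) (e i)‖₊ : ℝ≥0∞) ^ 2 ≤
      ENNReal.ofReal ν * (‖X (e i)‖₊ : ℝ≥0∞) ^ 2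
        + ENNReal.ofReal (1 - ν) * (‖adjoint Y (e i)‖₊ : ℝ≥0∞) ^ 2 := by
    intro i
    rw [enn_norm_sq, enn_norm_sq, enn_norm_sq, ← ENNReal.ofReal_mul h0,
      ← ENNReal.ofReal_mul (by linarith : (0:ℝ) ≤ 1 - ν),
      ← ENNReal.ofReal_add (mul_nonneg h0 (sq_nonneg _))
        (mul_nonneg (by linarith : (0:ℝ) ≤ 1 - ν) (sq_nonneg _))]
    refine ENNReal.ofReal_le_ofReal ?_
    have h := conv_sq h0 h1 θ (X (e i)) (adjoint Y (e i))
    simpa only [ContinuousLinearMap.add_apply, ContinuousLinearMap.smul_apply] using h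
  calc hsE e (c • X + c' • adjoint Y)
      ≤ ∑' i, (ENNReal.ofReal ν * (‖X (e i)‖₊ : ℝ≥0∞) ^ 2
          + ENNReal.ofReal (1 - ν) * (‖adjoint Y (e i)‖₊ : ℝ≥0∞) ^ 2) :=
        ENNReal.tsum_le_tsum key
    _ = ENNReal.ofReal ν * hsE e X + ENNReal.ofReal (1 - ν) * hsE e (adjoint Y) := by
        rw [ENNReal.tsum_add, ENNReal.tsum_mul_left, ENNReal.tsum_mul_left]; rfl
    _ = _ := by rw [← hsE_adjoint_self]

lemma le_of_sq_le_sq' {a b : ℝ} (ha : 0 ≤ a) (hb : 0 ≤ b) (h : a ^ 2 ≤ b ^ 2) : a ≤ b := by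
  nlinarith

theorem stmt17 {ι κ : Type*} (e : HilbertBasis ι ℂ H)
    (f : HilbertBasis κ ℂ (WithLp 2 (H × H)))
    (A B C D : H →L[ℂ] H)
    (hA : Summable fun i => ‖A (e i)‖ ^ 2) (hB : Summable fun i => ‖B (e i)‖ ^ 2)
    (hC : Summable fun i => ‖C (e i)‖ ^ 2) (hD : Summable fun i => ‖D (e i)‖ ^ 2)
    (ν : ℝ) (hν₀ : 0 ≤ ν) (hν₁ : ν ≤ 1) :
    (wHS f ν (blockOp A B C D)) ^ 2 ≤
      (wHS e ν A) ^ 2 + (wHS e ν D) ^ 2 + (hsNorm e B) ^ 2 + (hsNorm e C) ^ 2 := by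
  set T := blockOp A B C D with hT
  have hsum1 : ENNReal.ofReal ν + ENNReal.ofReal (1 - ν) = 1 := by
    rw [← ENNReal.ofReal_add hν₀ (by linarith)]; norm_num
  -- finiteness
  have hAe : hsE e A ≠ ⊤ := hsE_ne_top_of_summable e A hA
  have hBe : hsE e B ≠ ⊤ := hsE_ne_top_of_summable e B hB
  have hCe : hsE e C ≠ ⊤ := hsE_ne_top_of_summable e C hC
  have hDe : hsE e D ≠ ⊤ := hsE_ne_top_of_summable e D hD
  -- weighted part bounded by the energy itself
  have hwp_le : ∀ (X : H →L[ℂ] H) (θ : ℝ), hsE e (weightedPart ν θ X) ≤ hsE e X := by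
    intro X θ
    refine le_trans (hsE_conv e hν₀ hν₁ θ X X) ?_
    rw [← add_mul, hsum1, one_mul]
  -- block decomposition of the weighted part
  have hdec : ∀ θ : ℝ, weightedPart ν θ T =
      blockOp (weightedPart ν θ A)
        (((ν : ℂ) * Complex.exp (θ * Complex.I)) • B
          + (((1 - ν : ℝ) : ℂ) * Complex.exp (-(θ * Complex.I))) • adjoint C)
        (((ν : ℂ) * Complex.exp (θ * Complex.I)) • C
          + (((1 - ν : ℝ) : ℂ) * Complex.exp (-(θ * Complex.I))) • adjoint B)
        (weightedPart ν θ D) := by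
    intro θ
    show ((ν : ℂ) * Complex.exp (θ * Complex.I)) • T
      + (((1 - ν : ℝ) : ℂ) * Complex.exp (-(θ * Complex.I))) • adjoint T = _
    rw [hT, adjoint_blockOp, blockOp_lin]
    rfl
  -- master ENNReal estimate
  have master : ∀ θ : ℝ, hsE f (weightedPart ν θ T) ≤
      hsE e (weightedPart ν θ A) + hsE e (weightedPart ν θ D) + (hsE e B + hsE e C) := by
    intro θ
    rw [hdec θ, hsE_blockOp f e]
    have h2 := hsE_conv e hν₀ hν₁ θ B C
    have h3 := hsE_conv e hν₀ hν₁ θ C B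
    calc hsE e (weightedPart ν θ A)
        + hsE e (((ν : ℂ) * Complex.exp (θ * Complex.I)) • B
          + (((1 - ν : ℝ) : ℂ) * Complex.exp (-(θ * Complex.I))) • adjoint C)
        + hsE e (((ν : ℂ) * Complex.exp (θ * Complex.I)) • C
          + (((1 - ν : ℝ) : ℂ) * Complex.exp (-(θ * Complex.I))) • adjoint B)
        + hsE e (weightedPart ν θ D)
        ≤ hsE e (weightedPart ν θ A)
          + (ENNReal.ofReal ν * hsE e B + ENNReal.ofReal (1 - ν) * hsE e C)
          + (ENNReal.ofReal ν * hsE e C + ENNReal.ofReal (1 - ν) * hsE e B)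
          + hsE e (weightedPart ν θ D) := by gcongr
      _ = hsE e (weightedPart ν θ A) + hsE e (weightedPart ν θ D)
          + ((ENNReal.ofReal ν + ENNReal.ofReal (1 - ν)) * hsE e B
            + (ENNReal.ofReal ν + ENNReal.ofReal (1 - ν)) * hsE e C) := by ring
      _ = _ := by rw [hsum1, one_mul, one_mul]
  -- real per-θ inequality
  have hreal : ∀ θ : ℝ, hsNorm f (weightedPart ν θ T) ^ 2 ≤
      hsNorm e (weightedPart ν θ A) ^ 2 + hsNorm e (weightedPart ν θ D) ^ 2
        + hsNorm e B ^ 2 + hsNorm e C ^ 2 := by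
    intro θ
    have hwA : hsE e (weightedPart ν θ A) ≠ ⊤ := ne_top_of_le_ne_top hAe (hwp_le A θ)
    have hwD : hsE e (weightedPart ν θ D) ≠ ⊤ := ne_top_of_le_ne_top hDe (hwp_le D θ)
    have hBC : hsE e B + hsE e C ≠ ⊤ := ENNReal.add_ne_top.mpr ⟨hBe, hCe⟩
    have hRne : hsE e (weightedPart ν θ A) + hsE e (weightedPart ν θ D)
        + (hsE e B + hsE e C) ≠ ⊤ :=
      ENNReal.add_ne_top.mpr ⟨ENNReal.add_ne_top.mpr ⟨hwA, hwD⟩, hBC⟩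
    rw [hsNorm_sq_eq, hsNorm_sq_eq, hsNorm_sq_eq, hsNorm_sq_eq, hsNorm_sq_eq]
    refine le_trans (ENNReal.toReal_mono hRne (master θ)) ?_
    rw [ENNReal.toReal_add (ENNReal.add_ne_top.mpr ⟨hwA, hwD⟩) hBC,
      ENNReal.toReal_add hwA hwD, ENNReal.toReal_add hBe hCe]
    linarith
  -- boundedness of the weighted parts for A and D
  have hb : ∀ (X : H →L[ℂ] H), hsE e X ≠ ⊤ →
      ∀ θ, hsNorm e (weightedPart ν θ X) ≤ hsNorm e X := by
    intro X hX θ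
    refine le_of_sq_le_sq' (hsNorm_nonneg e _) (hsNorm_nonneg e _) ?_
    rw [hsNorm_sq_eq, hsNorm_sq_eq]
    exact ENNReal.toReal_mono hX (hwp_le X θ)
  have hbddA : BddAbove (Set.range fun θ => hsNorm e (weightedPart ν θ A)) :=
    ⟨hsNorm e A, by rintro x ⟨θ, rfl⟩; exact hb A hAe θ⟩
  have hbddD : BddAbove (Set.range fun θ => hsNorm e (weightedPart ν θ D)) :=
    ⟨hsNorm e D, by rintro x ⟨θ, rfl⟩; exact hb D hDe θ⟩
  have hAle : ∀ θ, hsNorm e (weightedPart ν θ A) ≤ wHS e ν A := fun θ =>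
    le_ciSup hbddA θ
  have hDle : ∀ θ, hsNorm e (weightedPart ν θ D) ≤ wHS e ν D := fun θ =>
    le_ciSup hbddD θ
  have hA0 : 0 ≤ wHS e ν A := le_trans (hsNorm_nonneg e _) (hAle 0)
  have hD0 : 0 ≤ wHS e ν D := le_trans (hsNorm_nonneg e _) (hDle 0)
  -- combine
  set R : ℝ := (wHS e ν A) ^ 2 + (wHS e ν D) ^ 2 + (hsNorm e B) ^ 2 + (hsNorm e C) ^ 2
    with hR
  have hR0 : 0 ≤ R := by positivity
  have hRθ : ∀ θ, hsNorm f (weightedPart ν θ T) ^ 2 ≤ R := by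
    intro θ
    refine le_trans (hreal θ) ?_
    have h1 : hsNorm e (weightedPart ν θ A) ^ 2 ≤ (wHS e ν A) ^ 2 :=
      pow_le_pow_left₀ (hsNorm_nonneg e _) (hAle θ) 2
    have h2 : hsNorm e (weightedPart ν θ D) ^ 2 ≤ (wHS e ν D) ^ 2 :=
      pow_le_pow_left₀ (hsNorm_nonneg e _) (hDle θ) 2
    rw [hR]; linarith
  have hfb : ∀ θ, hsNorm f (weightedPart ν θ T) ≤ Real.sqrt R := by
    intro θ
    refine le_of_sq_le_sq' (hsNorm_nonneg f _) (Real.sqrt_nonneg _) ?_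
    rw [Real.sq_sqrt hR0]
    exact hRθ θ
  have hsup : wHS f ν T ≤ Real.sqrt R := ciSup_le hfb
  have hbddT : BddAbove (Set.range fun θ => hsNorm f (weightedPart ν θ T)) :=
    ⟨Real.sqrt R, by rintro x ⟨θ, rfl⟩; exact hfb θ⟩
  have hT0 : 0 ≤ wHS f ν T := le_trans (hsNorm_nonneg f _) (le_ciSup hbddT 0)
  calc (wHS f ν T) ^ 2 ≤ (Real.sqrt R) ^ 2 := pow_le_pow_left₀ hT0 hsup 2
    _ = R := Real.sq_sqrt hR0
end

section
/- Let H be a complex Hilbert space, let A be a Hilbert–Schmidt operator on H, and let 0 ≤ ν ≤ 1. Write ℜ_ν(A) = νA + (1-ν)A* and ℑ_ν(A) = ν(-iA) + (1-ν)(iA*), and let T denote the block operator [[0, ℜ_ν(A)],[ℑ_ν(A), 0]] on H ⊕ H. Then ((1 + |1 - 2ν|)/√2) · w_{(2,ν)}(A) ≤ w_{(2,ν)}(T) ≤ √2 · w_{(2,ν)}(A). -/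
variable {H : Type*} [NormedAddCommGroup H] [InnerProductSpace ℂ H] [CompleteSpace H]

/-! ### Auxiliary machinery -/

open scoped ENNReal NNReal ComplexConjugate Real
open ContinuousLinearMap

section eHS

variable {E F : Type*} [NormedAddCommGroup E] [InnerProductSpace ℂ E]
  [NormedAddCommGroup F] [InnerProductSpace ℂ F]

/-- The square of the Hilbert–Schmidt norm, valued in `ℝ≥0∞`. -/
noncomputable def eHS {ι : Type*} (e : HilbertBasis ι ℂ E) (T : E →L[ℂ] F) : ℝ≥0∞ :=
  ∑' i, (‖T (e i)‖₊ : ℝ≥0∞) ^ 2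

lemma enn_sq {G : Type*} [NormedAddCommGroup G] (x : G) :
    (‖x‖₊ : ℝ≥0∞) ^ 2 = ENNReal.ofReal (‖x‖ ^ 2) := by
  rw [ENNReal.ofReal_pow (norm_nonneg x), ← coe_nnnorm x, ENNReal.ofReal_coe_nnreal]

lemma hasSum_parseval {ι : Type*} (e : HilbertBasis ι ℂ E) (x : E) :
    HasSum (fun i => ‖(inner ℂ (e i) x : ℂ)‖ ^ 2) (‖x‖ ^ 2) := by
  have h' := Complex.reCLM.hasSum (e.hasSum_inner_mul_inner x x)
  have h2 : (fun i => Complex.reCLM ((inner ℂ x (e i) : ℂ) * (inner ℂ (e i) x : ℂ)))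
      = fun i => ‖(inner ℂ (e i) x : ℂ)‖ ^ 2 := by
    funext i
    rw [Complex.reCLM_apply, ← inner_conj_symm x (e i), RCLike.conj_mul]
    simp [← Complex.ofReal_pow]
  have h3 : Complex.reCLM (inner ℂ x x : ℂ) = ‖x‖ ^ 2 := by
    exact inner_self_eq_norm_sq (𝕜 := ℂ) x
  rw [h2, h3] at h'
  exact h'

lemma parseval {ι : Type*} (e : HilbertBasis ι ℂ E) (x : E) :
    ∑' i, (‖(inner ℂ (e i) x : ℂ)‖₊ : ℝ≥0∞) ^ 2 = (‖x‖₊ : ℝ≥0∞) ^ 2 := by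
  simp only [enn_sq]
  rw [← ENNReal.ofReal_tsum_of_nonneg (fun i => sq_nonneg _) (hasSum_parseval e x).summable,
    (hasSum_parseval e x).tsum_eq]

variable [CompleteSpace E] [CompleteSpace F]

lemma eHS_flip {ι κ : Type*} (e : HilbertBasis ι ℂ E) (f : HilbertBasis κ ℂ F)
    (T : E →L[ℂ] F) : eHS e T = eHS f (ContinuousLinearMap.adjoint T) := by
  unfold eHS
  have h1 : ∀ i, (‖T (e i)‖₊ : ℝ≥0∞) ^ 2
      = ∑' j, (‖(inner ℂ (ContinuousLinearMap.adjoint T (f j)) (e i) : ℂ)‖₊ : ℝ≥0∞) ^ 2 := by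
    intro i
    rw [← parseval f (T (e i))]
    congr 1; funext j
    rw [ContinuousLinearMap.adjoint_inner_left]
  have h2 : ∀ j, (‖ContinuousLinearMap.adjoint T (f j)‖₊ : ℝ≥0∞) ^ 2
      = ∑' i, (‖(inner ℂ (ContinuousLinearMap.adjoint T (f j)) (e i) : ℂ)‖₊ : ℝ≥0∞) ^ 2 := by
    intro j
    rw [← parseval e (ContinuousLinearMap.adjoint T (f j))]
    congr 1; funext i
    rw [enn_sq, enn_sq, norm_inner_symm]
  simp only [h1, h2]
  exact ENNReal.tsum_comm

lemma eHS_smul {ι : Type*} (e : HilbertBasis ι ℂ E) (c : ℂ) (T : E →L[ℂ] F) :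
    eHS e (c • T) = (‖c‖₊ : ℝ≥0∞) ^ 2 * eHS e T := by
  unfold eHS
  rw [← ENNReal.tsum_mul_left]
  congr 1; funext i
  rw [ContinuousLinearMap.smul_apply, nnnorm_smul, ← mul_pow]
  push_cast
  ring

lemma eHS_parallelogram {ι : Type*} (e : HilbertBasis ι ℂ E) (X Y : E →L[ℂ] F) :
    eHS e (X + Y) + eHS e (X - Y) = 2 * eHS e X + 2 * eHS e Y := by
  unfold eHS
  rw [← ENNReal.tsum_add, ← ENNReal.tsum_mul_left, ← ENNReal.tsum_mul_left, ← ENNReal.tsum_add]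
  congr 1; funext i
  simp only [ContinuousLinearMap.add_apply, ContinuousLinearMap.sub_apply, enn_sq]
  rw [← ENNReal.ofReal_add (sq_nonneg _) (sq_nonneg _)]
  have hx : (2:ℝ≥0∞) * ENNReal.ofReal (‖X (e i)‖ ^ 2) = ENNReal.ofReal (2 * ‖X (e i)‖ ^ 2) := by
    rw [ENNReal.ofReal_mul (by norm_num)]; norm_num
  have hy : (2:ℝ≥0∞) * ENNReal.ofReal (‖Y (e i)‖ ^ 2) = ENNReal.ofReal (2 * ‖Y (e i)‖ ^ 2) := by
    rw [ENNReal.ofReal_mul (by norm_num)]; norm_num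
  rw [hx, hy, ← ENNReal.ofReal_add (by positivity) (by positivity)]
  congr 1
  have := parallelogram_law_with_norm ℂ (X (e i)) (Y (e i))
  linarith

lemma eHS_add_le {ι : Type*} (e : HilbertBasis ι ℂ E) (X Y : E →L[ℂ] F) :
    eHS e (X + Y) ≤ 2 * eHS e X + 2 * eHS e Y := by
  rw [← eHS_parallelogram e X Y]; exact le_self_add

lemma tsum_sq_eq_toReal {ι : Type*} (e : HilbertBasis ι ℂ E) (T : E →L[ℂ] F) :
    ∑' i, ‖T (e i)‖ ^ 2 = (eHS e T).toReal := by
  unfold eHS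
  by_cases h : Summable fun i => (‖T (e i)‖₊ ^ 2 : ℝ≥0)
  · have h1 : ∑' i, ((‖T (e i)‖₊ : ℝ≥0∞)) ^ 2 = ((∑' i, (‖T (e i)‖₊ ^ 2 : ℝ≥0) : ℝ≥0) : ℝ≥0∞) := by
      rw [ENNReal.coe_tsum h]
      push_cast
      rfl
    rw [h1, ENNReal.coe_toReal, NNReal.coe_tsum]
    congr 1
  · have h1 : (∑' i, ((‖T (e i)‖₊ : ℝ≥0∞)) ^ 2) = ⊤ := by
      by_contra hc
      apply h
      have := ENNReal.tsum_coe_ne_top_iff_summable (f := fun i => (‖T (e i)‖₊ ^ 2 : ℝ≥0))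
      apply this.mp
      convert hc using 2 with i
      exact funext fun i => ENNReal.coe_pow _ _
    rw [h1, ENNReal.toReal_top]
    rw [tsum_eq_zero_of_not_summable]
    intro hc
    apply h
    have : ∀ i, ‖T (e i)‖ ^ 2 = ((‖T (e i)‖₊ ^ 2 : ℝ≥0) : ℝ) := by intro i; push_cast; rfl
    rw [funext this] at hc
    exact NNReal.summable_coe.mp hc

lemma hsNorm_eq_sqrt_eHS {ι : Type*} (e : HilbertBasis ι ℂ E) (T : E →L[ℂ] E) :
    hsNorm e T = Real.sqrt ((eHS e T).toReal) := by
  unfold hsNorm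
  rw [tsum_sq_eq_toReal]

end eHS

/-! ### Block operator lemmas -/

lemma blockOp_fst (X Y Z W : H →L[ℂ] H) (v : WithLp 2 (H × H)) :
    (blockOp X Y Z W v).fst = X v.fst + Y v.snd := rfl

lemma blockOp_snd (X Y Z W : H →L[ℂ] H) (v : WithLp 2 (H × H)) :
    (blockOp X Y Z W v).snd = Z v.fst + W v.snd := rfl

lemma withlp_ext {v w : WithLp 2 (H × H)} (h1 : v.fst = w.fst) (h2 : v.snd = w.snd) : v = w :=
  WithLp.ofLp_injective 2 (Prod.ext h1 h2)

lemma blockOp_smul (c : ℂ) (Y Z : H →L[ℂ] H) :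
    c • blockOp 0 Y Z 0 = blockOp 0 (c • Y) (c • Z) 0 := by
  refine ContinuousLinearMap.ext fun v => withlp_ext ?_ ?_ <;>
    simp [blockOp_fst, blockOp_snd, WithLp.smul_fst, WithLp.smul_snd]

lemma blockOp_add (Y Z Y' Z' : H →L[ℂ] H) :
    blockOp 0 Y Z 0 + blockOp 0 Y' Z' 0 = blockOp 0 (Y + Y') (Z + Z') 0 := by
  refine ContinuousLinearMap.ext fun v => withlp_ext ?_ ?_ <;>
    simp [blockOp_fst, blockOp_snd, WithLp.add_fst, WithLp.add_snd] <;> abel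

lemma blockOp_adjoint (Y Z : H →L[ℂ] H) :
    ContinuousLinearMap.adjoint (blockOp 0 Y Z 0)
      = blockOp 0 (ContinuousLinearMap.adjoint Z) (ContinuousLinearMap.adjoint Y) 0 := by
  symm
  rw [ContinuousLinearMap.eq_adjoint_iff]
  intro x y
  rw [WithLp.prod_inner_apply, WithLp.prod_inner_apply]
  simp only [WithLp.ofLp_fst, WithLp.ofLp_snd]
  rw [blockOp_fst, blockOp_snd,
    blockOp_fst, blockOp_snd]
  simp [adjoint_inner_left]
  ring

lemma nnnorm_sq_pair_left (x : H) :
    ((‖(WithLp.equiv 2 (H × H)).symm (x, 0)‖₊ : ℝ≥0∞)) ^ 2 = (‖x‖₊ : ℝ≥0∞) ^ 2 := by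
  rw [enn_sq, enn_sq, WithLp.prod_norm_sq_eq_of_L2]
  simp

lemma nnnorm_sq_pair_right (x : H) :
    ((‖(WithLp.equiv 2 (H × H)).symm (0, x)‖₊ : ℝ≥0∞)) ^ 2 = (‖x‖₊ : ℝ≥0∞) ^ 2 := by
  rw [enn_sq, enn_sq, WithLp.prod_norm_sq_eq_of_L2]
  simp

lemma eHS_blockOp {ι κ : Type*} (e : HilbertBasis ι ℂ H)
    (f : HilbertBasis κ ℂ (WithLp 2 (H × H))) (B C : H →L[ℂ] H) :
    eHS f (blockOp 0 B C 0) = eHS e B + eHS e C := by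
  unfold eHS
  have hnorm : ∀ j, (‖blockOp 0 B C 0 (f j)‖₊ : ℝ≥0∞) ^ 2
      = (‖B (f j).snd‖₊ : ℝ≥0∞) ^ 2 + (‖C (f j).fst‖₊ : ℝ≥0∞) ^ 2 := by
    intro j
    rw [enn_sq, enn_sq, enn_sq, WithLp.prod_norm_sq_eq_of_L2, blockOp_fst, blockOp_snd,
      ← ENNReal.ofReal_add (sq_nonneg _) (sq_nonneg _)]
    simp
  simp only [hnorm]
  rw [ENNReal.tsum_add]
  congr 1
  · have hterm : ∀ j, (‖B (f j).snd‖₊ : ℝ≥0∞) ^ 2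
        = ∑' i, (‖(inner ℂ ((WithLp.equiv 2 (H × H)).symm
            (0, ContinuousLinearMap.adjoint B (e i))) (f j) : ℂ)‖₊ : ℝ≥0∞) ^ 2 := by
      intro j
      rw [← parseval e (B (f j).snd)]
      congr 1; funext i
      rw [← ContinuousLinearMap.adjoint_inner_left]
      congr 1
      rw [WithLp.prod_inner_apply]
      simp
    simp only [hterm]
    rw [ENNReal.tsum_comm]
    have hin : ∀ i, (∑' j, (‖(inner ℂ ((WithLp.equiv 2 (H × H)).symm
        (0, ContinuousLinearMap.adjoint B (e i))) (f j) : ℂ)‖₊ : ℝ≥0∞) ^ 2)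
        = (‖ContinuousLinearMap.adjoint B (e i)‖₊ : ℝ≥0∞) ^ 2 := by
      intro i
      rw [← nnnorm_sq_pair_right (ContinuousLinearMap.adjoint B (e i)), ← parseval f]
      congr 1; funext j
      rw [enn_sq, enn_sq, norm_inner_symm]
    simp only [hin]
    exact (eHS_flip e e B).symm
  · have hterm : ∀ j, (‖C (f j).fst‖₊ : ℝ≥0∞) ^ 2
        = ∑' i, (‖(inner ℂ ((WithLp.equiv 2 (H × H)).symm
            (ContinuousLinearMap.adjoint C (e i), 0)) (f j) : ℂ)‖₊ : ℝ≥0∞) ^ 2 := by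
      intro j
      rw [← parseval e (C (f j).fst)]
      congr 1; funext i
      rw [← ContinuousLinearMap.adjoint_inner_left]
      congr 1
      rw [WithLp.prod_inner_apply]
      simp
    simp only [hterm]
    rw [ENNReal.tsum_comm]
    have hin : ∀ i, (∑' j, (‖(inner ℂ ((WithLp.equiv 2 (H × H)).symm
        (ContinuousLinearMap.adjoint C (e i), 0)) (f j) : ℂ)‖₊ : ℝ≥0∞) ^ 2)
        = (‖ContinuousLinearMap.adjoint C (e i)‖₊ : ℝ≥0∞) ^ 2 := by
      intro i
      rw [← nnnorm_sq_pair_left (ContinuousLinearMap.adjoint C (e i)), ← parseval f]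
      congr 1; funext j
      rw [enn_sq, enn_sq, norm_inner_symm]
    simp only [hin]
    exact (eHS_flip e e C).symm

/-! ### Scalar/operator algebra -/

lemma adjoint_comb (c d : ℂ) (A : H →L[ℂ] H) :
    ContinuousLinearMap.adjoint (c • A + d • ContinuousLinearMap.adjoint A)
      = conj c • ContinuousLinearMap.adjoint A + conj d • A := by
  simp [map_add, map_smulₛₗ, ContinuousLinearMap.adjoint_adjoint]

lemma exp_shift (θ c : ℝ) : Complex.exp (((θ - c : ℝ) : ℂ) * Complex.I)
    = Complex.exp ((θ:ℝ) * Complex.I) * Complex.exp (-((((c:ℝ)):ℂ) * Complex.I)) := by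
  rw [← Complex.exp_add]; congr 1; push_cast; ring

lemma exp_quarter_sq : Complex.exp (((π/4 : ℝ):ℂ) * Complex.I)
    * Complex.exp (((π/4 : ℝ):ℂ) * Complex.I) = Complex.I := by
  rw [← Complex.exp_add]
  have : ((π/4 : ℝ):ℂ) * Complex.I + ((π/4 : ℝ):ℂ) * Complex.I = ((π/2 : ℝ):ℂ) * Complex.I := by
    push_cast; ring
  rw [this, Complex.exp_mul_I]
  push_cast
  simp [Complex.cos_pi_div_two, Complex.sin_pi_div_two]

lemma exp_nquarter_sq : Complex.exp (-(((π/4 : ℝ):ℂ) * Complex.I))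
    * Complex.exp (-(((π/4 : ℝ):ℂ) * Complex.I)) = -Complex.I := by
  rw [← Complex.exp_add]
  have : -(((π/4 : ℝ):ℂ) * Complex.I) + -(((π/4 : ℝ):ℂ) * Complex.I)
      = (-(π/2 : ℝ) : ℂ) * Complex.I := by push_cast; ring
  rw [this, Complex.exp_mul_I]
  push_cast
  simp [Complex.cos_pi_div_two, Complex.sin_pi_div_two, Complex.cos_neg, Complex.sin_neg]

lemma exp_quarter_mul : Complex.exp (((π/4 : ℝ):ℂ) * Complex.I)
    * Complex.exp (-(((π/4 : ℝ):ℂ) * Complex.I)) = 1 := by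
  rw [← Complex.exp_add]
  simp

lemma adjoint_weightedPart (ν θ : ℝ) (A : H →L[ℂ] H) :
    ContinuousLinearMap.adjoint (weightedPart ν θ A)
      = (((1 - ν : ℝ):ℂ) * Complex.exp ((θ:ℝ) * Complex.I)) • A
        + ((ν:ℂ) * Complex.exp (-((θ:ℝ) * Complex.I))) • ContinuousLinearMap.adjoint A := by
  unfold weightedPart
  rw [adjoint_comb]
  have h1 : conj ((ν : ℂ) * Complex.exp ((θ:ℝ) * Complex.I))
      = (ν:ℂ) * Complex.exp (-((θ:ℝ) * Complex.I)) := by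
    rw [map_mul, ← Complex.exp_conj]
    simp
  have h2 : conj (((1 - ν : ℝ) : ℂ) * Complex.exp (-((θ:ℝ) * Complex.I)))
      = ((1 - ν : ℝ):ℂ) * Complex.exp ((θ:ℝ) * Complex.I) := by
    rw [map_mul, ← Complex.exp_conj]
    simp
  rw [h1, h2]
  ring_nf
  module

section Combos
variable (ν θ : ℝ) (A : H →L[ℂ] H)

noncomputable def Rop : H →L[ℂ] H :=
  (ν : ℂ) • A + ((1 - ν : ℝ) : ℂ) • ContinuousLinearMap.adjoint A

noncomputable def Iop : H →L[ℂ] H :=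
  (-(Complex.I) * (ν : ℂ)) • A + (Complex.I * ((1 - ν : ℝ) : ℂ)) • ContinuousLinearMap.adjoint A

lemma combo1 :
    (((ν : ℂ) * Complex.exp ((θ:ℝ) * Complex.I)) • Rop ν A
      + (((1 - ν : ℝ) : ℂ) * Complex.exp (-((θ:ℝ) * Complex.I))) •
          ContinuousLinearMap.adjoint (Iop ν A))
    + Complex.I • (((ν : ℂ) * Complex.exp ((θ:ℝ) * Complex.I)) • Iop ν A
      + (((1 - ν : ℝ) : ℂ) * Complex.exp (-((θ:ℝ) * Complex.I))) •
          ContinuousLinearMap.adjoint (Rop ν A))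
    = (((2*ν : ℝ):ℂ) * Complex.exp (((π/4 : ℝ):ℂ) * Complex.I)) •
        weightedPart ν (θ - π/4) A := by
  unfold Rop Iop weightedPart
  rw [adjoint_comb, adjoint_comb]
  have he : Complex.exp (((θ - π/4 : ℝ) : ℂ) * Complex.I)
      = Complex.exp ((θ:ℝ) * Complex.I) * Complex.exp (-((((π/4:ℝ)):ℂ) * Complex.I)) :=
    exp_shift θ (π/4)
  have he' : Complex.exp (-(((θ - π/4 : ℝ) : ℂ) * Complex.I))
      = Complex.exp (-((θ:ℝ) * Complex.I)) * Complex.exp (((π/4:ℝ):ℂ) * Complex.I) := by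
    rw [← Complex.exp_add]; congr 1; push_cast; ring
  rw [he, he']
  have hu2 := exp_quarter_sq
  have huv := exp_quarter_mul
  have hI : Complex.I * Complex.I = -1 := Complex.I_mul_I
  simp only [map_mul, map_sub, map_one, map_neg, Complex.conj_I, Complex.conj_ofReal]
  push_cast at hu2 huv ⊢
  match_scalars
  · push_cast
    linear_combination (-2*(ν:ℂ)^2 * Complex.exp ((θ:ℝ) * Complex.I)) * huv
      + (-(ν:ℂ)^2 * Complex.exp ((θ:ℝ) * Complex.I)) * hI
  · push_cast
    linear_combination (-2*(ν:ℂ)*((1:ℂ)-(ν:ℂ)) * Complex.exp (-((θ:ℝ) * Complex.I))) * hu2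
      + ((ν:ℂ)*((1:ℂ)-(ν:ℂ)) * Complex.exp ((θ:ℝ) * Complex.I)) * hI

lemma combo2 :
    (((ν : ℂ) * Complex.exp ((θ:ℝ) * Complex.I)) • Rop ν A
      + (((1 - ν : ℝ) : ℂ) * Complex.exp (-((θ:ℝ) * Complex.I))) •
          ContinuousLinearMap.adjoint (Iop ν A))
    - Complex.I • (((ν : ℂ) * Complex.exp ((θ:ℝ) * Complex.I)) • Iop ν A
      + (((1 - ν : ℝ) : ℂ) * Complex.exp (-((θ:ℝ) * Complex.I))) •
          ContinuousLinearMap.adjoint (Rop ν A))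
    = (((2*(1-ν) : ℝ):ℂ) * Complex.exp (-(((π/4 : ℝ):ℂ) * Complex.I))) •
        ContinuousLinearMap.adjoint (weightedPart ν (-θ - π/4) A) := by
  rw [adjoint_weightedPart]
  unfold Rop Iop
  rw [adjoint_comb, adjoint_comb]
  have hf : Complex.exp (((-θ - π/4 : ℝ) : ℂ) * Complex.I)
      = Complex.exp (-((θ:ℝ) * Complex.I)) * Complex.exp (-((((π/4:ℝ)):ℂ) * Complex.I)) := by
    rw [← Complex.exp_add]; congr 1; push_cast; ring
  have hf' : Complex.exp (-(((-θ - π/4 : ℝ) : ℂ) * Complex.I))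
      = Complex.exp ((θ:ℝ) * Complex.I) * Complex.exp (((π/4:ℝ):ℂ) * Complex.I) := by
    rw [← Complex.exp_add]; congr 1; push_cast; ring
  rw [hf, hf']
  have hv2 := exp_nquarter_sq
  have huv := exp_quarter_mul
  have hI : Complex.I * Complex.I = -1 := Complex.I_mul_I
  simp only [map_mul, map_sub, map_one, map_neg, Complex.conj_I, Complex.conj_ofReal]
  push_cast at hv2 huv ⊢
  match_scalars
  · push_cast
    linear_combination ((ν:ℂ)^2 * Complex.exp ((θ:ℝ) * Complex.I)) * hI
      + (-2*((1:ℂ)-(ν:ℂ))^2 * Complex.exp (-((θ:ℝ) * Complex.I))) * hv2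
  · push_cast
    linear_combination (-2*(ν:ℂ)*((1:ℂ)-(ν:ℂ)) * Complex.exp ((θ:ℝ) * Complex.I)) * huv
      + (-(ν:ℂ)*((1:ℂ)-(ν:ℂ)) * Complex.exp ((θ:ℝ) * Complex.I)) * hI
end Combos

lemma weightedPart_blockOp (ν θ : ℝ) (Y Z : H →L[ℂ] H) :
    weightedPart ν θ (blockOp 0 Y Z 0) = blockOp 0
      (((ν:ℂ) * Complex.exp ((θ:ℝ) * Complex.I)) • Y
        + (((1-ν:ℝ):ℂ) * Complex.exp (-((θ:ℝ) * Complex.I))) • ContinuousLinearMap.adjoint Z)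
      (((ν:ℂ) * Complex.exp ((θ:ℝ) * Complex.I)) • Z
        + (((1-ν:ℝ):ℂ) * Complex.exp (-((θ:ℝ) * Complex.I))) • ContinuousLinearMap.adjoint Y)
      0 := by
  unfold weightedPart
  rw [blockOp_adjoint, blockOp_smul, blockOp_smul, blockOp_add]

lemma norm_sq_coef (r x : ℝ) :
    ‖((r:ℝ):ℂ) * Complex.exp (((x:ℝ):ℂ) * Complex.I)‖ ^ 2 = r ^ 2 := by
  rw [norm_mul, Complex.norm_exp_ofReal_mul_I,
    Complex.norm_real, mul_one, Real.norm_eq_abs, sq_abs]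

lemma norm_sq_coef' (r x : ℝ) :
    ‖((r:ℝ):ℂ) * Complex.exp (-(((x:ℝ):ℂ) * Complex.I))‖ ^ 2 = r ^ 2 := by
  have : -(((x:ℝ):ℂ) * Complex.I) = ((-x : ℝ):ℂ) * Complex.I := by push_cast; ring
  rw [this, norm_sq_coef]

theorem stmt18 {ι κ : Type*} (e : HilbertBasis ι ℂ H)
    (f : HilbertBasis κ ℂ (WithLp 2 (H × H)))
    (A : H →L[ℂ] H) (hA : Summable fun i => ‖A (e i)‖ ^ 2)
    (ν : ℝ) (hν₀ : 0 ≤ ν) (hν₁ : ν ≤ 1) :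
    (1 + |1 - 2 * ν|) / Real.sqrt 2 * wHS e ν A ≤
        wHS f ν (blockOp 0
          ((ν : ℂ) • A + ((1 - ν : ℝ) : ℂ) • ContinuousLinearMap.adjoint A)
          ((-(Complex.I) * (ν : ℂ)) • A +
            (Complex.I * ((1 - ν : ℝ) : ℂ)) • ContinuousLinearMap.adjoint A) 0) ∧
      wHS f ν (blockOp 0
          ((ν : ℂ) • A + ((1 - ν : ℝ) : ℂ) • ContinuousLinearMap.adjoint A)
          ((-(Complex.I) * (ν : ℂ)) • A +
            (Complex.I * ((1 - ν : ℝ) : ℂ)) • ContinuousLinearMap.adjoint A) 0) ≤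
        Real.sqrt 2 * wHS e ν A := by
  have hRop : ((ν : ℂ) • A + ((1 - ν : ℝ) : ℂ) • ContinuousLinearMap.adjoint A) = Rop ν A := rfl
  have hIop : ((-(Complex.I) * (ν : ℂ)) • A +
      (Complex.I * ((1 - ν : ℝ) : ℂ)) • ContinuousLinearMap.adjoint A) = Iop ν A := rfl
  rw [hRop, hIop]
  -- notation
  set T : WithLp 2 (H × H) →L[ℂ] WithLp 2 (H × H) := blockOp 0 (Rop ν A) (Iop ν A) 0 with hT
  set s : ℝ → ℝ≥0∞ := fun φ => eHS e (weightedPart ν φ A) with hs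
  -- finiteness
  have hc : eHS e A ≠ ⊤ := by
    have h1 : Summable fun i => (‖A (e i)‖₊ ^ 2 : ℝ≥0) := by
      apply NNReal.summable_coe.mp
      convert hA using 2 with i
      push_cast; rfl
    have := ENNReal.tsum_coe_ne_top_iff_summable.mpr h1
    unfold eHS
    convert this using 2 with i
    exact funext fun i => (ENNReal.coe_pow _ _).symm
  have hsle : ∀ φ, s φ ≤ 4 * eHS e A := by
    intro φ
    have h1 : s φ ≤ 2 * eHS e (((ν:ℂ) * Complex.exp ((φ:ℝ) * Complex.I)) • A)
        + 2 * eHS e ((((1-ν:ℝ):ℂ) * Complex.exp (-((φ:ℝ) * Complex.I))) •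
            ContinuousLinearMap.adjoint A) := eHS_add_le e _ _
    rw [eHS_smul, eHS_smul, ← eHS_flip e e A] at h1
    have hb1 : (‖(ν:ℂ) * Complex.exp ((φ:ℝ) * Complex.I)‖₊ : ℝ≥0∞) ^ 2 ≤ 1 := by
      rw [enn_sq, norm_sq_coef]
      apply ENNReal.ofReal_le_one.mpr
      nlinarith
    have hb2 : (‖((1-ν:ℝ):ℂ) * Complex.exp (-((φ:ℝ) * Complex.I))‖₊ : ℝ≥0∞) ^ 2 ≤ 1 := by
      rw [enn_sq, norm_sq_coef']
      apply ENNReal.ofReal_le_one.mpr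
      nlinarith
    calc s φ ≤ 2 * ((‖(ν:ℂ) * Complex.exp ((φ:ℝ) * Complex.I)‖₊ : ℝ≥0∞) ^ 2 * eHS e A)
          + 2 * ((‖((1-ν:ℝ):ℂ) * Complex.exp (-((φ:ℝ) * Complex.I))‖₊ : ℝ≥0∞) ^ 2 * eHS e A) := h1
      _ ≤ 2 * (1 * eHS e A) + 2 * (1 * eHS e A) := by
          gcongr
      _ = 4 * eHS e A := by rw [one_mul]; ring
  have h4c : (4 : ℝ≥0∞) * eHS e A ≠ ⊤ := ENNReal.mul_ne_top (by norm_num) hc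
  have hsne : ∀ φ, s φ ≠ ⊤ := fun φ => ((hsle φ).trans_lt (lt_top_iff_ne_top.mpr h4c)).ne
  -- the key identity
  have key : ∀ θ : ℝ, 2 * eHS f (weightedPart ν θ T)
      = ENNReal.ofReal (4 * ν^2) * s (θ - π/4)
        + ENNReal.ofReal (4 * (1-ν)^2) * s (-θ - π/4) := by
    intro θ
    rw [hT, weightedPart_blockOp]
    set B := ((ν:ℂ) * Complex.exp ((θ:ℝ) * Complex.I)) • Rop ν A
      + (((1-ν:ℝ):ℂ) * Complex.exp (-((θ:ℝ) * Complex.I))) •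
          ContinuousLinearMap.adjoint (Iop ν A) with hB
    set C := ((ν:ℂ) * Complex.exp ((θ:ℝ) * Complex.I)) • Iop ν A
      + (((1-ν:ℝ):ℂ) * Complex.exp (-((θ:ℝ) * Complex.I))) •
          ContinuousLinearMap.adjoint (Rop ν A) with hC
    rw [eHS_blockOp e f B C]
    have hpar : eHS e (B + Complex.I • C) + eHS e (B - Complex.I • C)
        = 2 * eHS e B + 2 * eHS e C := by
      rw [eHS_parallelogram e B (Complex.I • C), eHS_smul]
      norm_num
    have hc1 : eHS e (B + Complex.I • C) = ENNReal.ofReal (4 * ν^2) * s (θ - π/4) := by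
      rw [hB, hC, combo1 ν θ A, eHS_smul, enn_sq, norm_sq_coef]
      rw [hs]
      congr 2
      ring
    have hc2 : eHS e (B - Complex.I • C) = ENNReal.ofReal (4 * (1-ν)^2) * s (-θ - π/4) := by
      rw [hB, hC, combo2 ν θ A, eHS_smul, enn_sq, norm_sq_coef', ← eHS_flip e e]
      rw [hs]
      congr 2
      ring
    rw [mul_add, ← hpar, hc1, hc2]
  -- real versions
  have hsnorm : ∀ φ, hsNorm e (weightedPart ν φ A) = Real.sqrt ((s φ).toReal) := by
    intro φ
    rw [hsNorm_eq_sqrt_eHS, hs]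
  have htoReal : ∀ θ : ℝ, (eHS f (weightedPart ν θ T)).toReal
      = 2 * ν^2 * (s (θ - π/4)).toReal + 2 * (1-ν)^2 * (s (-θ - π/4)).toReal := by
    intro θ
    have h1 := congrArg ENNReal.toReal (key θ)
    rw [ENNReal.toReal_mul, ENNReal.toReal_add
        (ENNReal.mul_ne_top ENNReal.ofReal_ne_top (hsne _))
        (ENNReal.mul_ne_top ENNReal.ofReal_ne_top (hsne _)),
      ENNReal.toReal_mul, ENNReal.toReal_mul,
      ENNReal.toReal_ofReal (by positivity), ENNReal.toReal_ofReal (by positivity)] at h1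
    norm_num at h1
    linarith
  -- the sup over θ of the small operator
  set w : ℝ := wHS e ν A with hw
  have hw0 : 0 ≤ w := Real.iSup_nonneg fun φ => Real.sqrt_nonneg _
  have hbddE : BddAbove (Set.range fun φ => hsNorm e (weightedPart ν φ A)) := by
    refine ⟨Real.sqrt ((4 * eHS e A).toReal), ?_⟩
    rintro x ⟨φ, rfl⟩
    dsimp only
    rw [hsnorm φ]
    exact Real.sqrt_le_sqrt (ENNReal.toReal_mono h4c (hsle φ))
  have hwle : ∀ φ, Real.sqrt ((s φ).toReal) ≤ w := by
    intro φ
    rw [← hsnorm φ]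
    exact le_ciSup hbddE φ
  have hsq : ∀ φ, (s φ).toReal ≤ w ^ 2 := by
    intro φ
    have h1 := hwle φ
    have h2 : (s φ).toReal = Real.sqrt ((s φ).toReal) ^ 2 :=
      (Real.sq_sqrt ENNReal.toReal_nonneg).symm
    rw [h2]
    exact pow_le_pow_left₀ (Real.sqrt_nonneg _) h1 2
  -- upper bound per θ
  have hupper : ∀ θ : ℝ, hsNorm f (weightedPart ν θ T) ≤ Real.sqrt 2 * w := by
    intro θ
    rw [hsNorm_eq_sqrt_eHS, htoReal θ]
    have h1 : 2 * ν^2 * (s (θ - π/4)).toReal + 2 * (1-ν)^2 * (s (-θ - π/4)).toReal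
        ≤ 2 * w^2 := by
      nlinarith [mul_le_mul_of_nonneg_left (hsq (θ - π/4)) (by positivity : (0:ℝ) ≤ 2*ν^2),
        mul_le_mul_of_nonneg_left (hsq (-θ - π/4)) (by positivity : (0:ℝ) ≤ 2*(1-ν)^2),
        mul_nonneg (mul_nonneg hν₀ (sub_nonneg.mpr hν₁)) (sq_nonneg w)]
    calc Real.sqrt (2 * ν^2 * (s (θ - π/4)).toReal + 2 * (1-ν)^2 * (s (-θ - π/4)).toReal)
        ≤ Real.sqrt (2 * w^2) := Real.sqrt_le_sqrt h1
      _ = Real.sqrt 2 * w := by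
          rw [Real.sqrt_mul (by norm_num), Real.sqrt_sq hw0]
  have hbddT : BddAbove (Set.range fun θ => hsNorm f (weightedPart ν θ T)) := by
    refine ⟨Real.sqrt 2 * w, ?_⟩
    rintro x ⟨θ, rfl⟩
    exact hupper θ
  constructor
  · -- lower bound
    have hlead : ∀ (φ : ℝ) (t : ℝ), 0 ≤ t → t ≤ 1 →
        Real.sqrt 2 * t * Real.sqrt ((s φ).toReal)
          = Real.sqrt (2 * t^2 * (s φ).toReal) := by
      intro φ t ht ht1
      rw [Real.sqrt_mul (by positivity), Real.sqrt_mul (by norm_num), Real.sqrt_sq ht]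
    have hnu : Real.sqrt 2 * ν * w ≤ wHS f ν T := by
      have hstep : ∀ φ : ℝ, Real.sqrt 2 * ν * Real.sqrt ((s φ).toReal) ≤ wHS f ν T := by
        intro φ
        have h1 : 2 * ν^2 * (s φ).toReal ≤ (eHS f (weightedPart ν (φ + π/4) T)).toReal := by
          rw [htoReal (φ + π/4)]
          have hφ : φ + π/4 - π/4 = φ := by ring
          rw [hφ]
          have : 0 ≤ 2 * (1-ν)^2 * (s (-(φ + π/4) - π/4)).toReal := by positivity
          linarith
        calc Real.sqrt 2 * ν * Real.sqrt ((s φ).toReal)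
            = Real.sqrt (2 * ν^2 * (s φ).toReal) := hlead φ ν hν₀ hν₁
          _ ≤ Real.sqrt ((eHS f (weightedPart ν (φ + π/4) T)).toReal) := Real.sqrt_le_sqrt h1
          _ = hsNorm f (weightedPart ν (φ + π/4) T) := (hsNorm_eq_sqrt_eHS f _).symm
          _ ≤ wHS f ν T := le_ciSup hbddT (φ + π/4)
      have h2 : Real.sqrt 2 * ν * w = ⨆ φ : ℝ, Real.sqrt 2 * ν * Real.sqrt ((s φ).toReal) := by
        rw [hw]
        unfold wHS
        rw [← Real.mul_iSup_of_nonneg (by positivity)]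
        congr 1
        exact iSup_congr hsnorm
      rw [h2]
      exact ciSup_le hstep
    have hnu' : Real.sqrt 2 * (1 - ν) * w ≤ wHS f ν T := by
      have hstep : ∀ φ : ℝ, Real.sqrt 2 * (1-ν) * Real.sqrt ((s φ).toReal) ≤ wHS f ν T := by
        intro φ
        have h1 : 2 * (1-ν)^2 * (s φ).toReal
            ≤ (eHS f (weightedPart ν (-φ - π/4) T)).toReal := by
          rw [htoReal (-φ - π/4)]
          have hφ : -(-φ - π/4) - π/4 = φ := by ring
          rw [hφ]
          have : 0 ≤ 2 * ν^2 * (s (-φ - π/4 - π/4)).toReal := by positivity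
          linarith
        calc Real.sqrt 2 * (1-ν) * Real.sqrt ((s φ).toReal)
            = Real.sqrt (2 * (1-ν)^2 * (s φ).toReal) := hlead φ (1-ν) (by linarith) (by linarith)
          _ ≤ Real.sqrt ((eHS f (weightedPart ν (-φ - π/4) T)).toReal) := Real.sqrt_le_sqrt h1
          _ = hsNorm f (weightedPart ν (-φ - π/4) T) := (hsNorm_eq_sqrt_eHS f _).symm
          _ ≤ wHS f ν T := le_ciSup hbddT (-φ - π/4)
      have h2 : Real.sqrt 2 * (1-ν) * w
          = ⨆ φ : ℝ, Real.sqrt 2 * (1-ν) * Real.sqrt ((s φ).toReal) := by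
        rw [hw]
        unfold wHS
        rw [← Real.mul_iSup_of_nonneg (mul_nonneg (Real.sqrt_nonneg 2) (by linarith))]
        congr 1
        exact iSup_congr hsnorm
      rw [h2]
      exact ciSup_le hstep
    have hs2 : Real.sqrt 2 * Real.sqrt 2 = 2 := Real.mul_self_sqrt (by norm_num)
    have hs2pos : (0:ℝ) < Real.sqrt 2 := by positivity
    rcases le_total ν (1/2) with h | h
    · have hmax : (1 + |1 - 2*ν|) / Real.sqrt 2 = Real.sqrt 2 * (1 - ν) := by
        rw [abs_of_nonneg (by linarith)]
        rw [div_eq_iff (ne_of_gt hs2pos)]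
        nlinarith
      rw [hmax]
      exact hnu'
    · have hmax : (1 + |1 - 2*ν|) / Real.sqrt 2 = Real.sqrt 2 * ν := by
        rw [abs_of_nonpos (by linarith)]
        rw [div_eq_iff (ne_of_gt hs2pos)]
        nlinarith
      rw [hmax]
      exact hnu
  · exact ciSup_le hupper
end
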